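/- If ẑ is a real root of h, then the trace of the Jacobian matrix J(ẑ, kₛ·ẑ⁴) equals T(ẑ) = c₃·ẑ⁶ − c₂·ẑ⁴ + c₁·ẑ² + c₀ − ε. -/

import Mathlib

open Real ContinuousLinearMap

lemma my_hasDerivAt_tanh (x : ℝ) : HasDerivAt Real.tanh (1 - Real.tanh x ^ 2) x := by
  have h := (Real.hasDerivAt_sinh x).div (Real.hasDerivAt_cosh x) (Real.cosh_pos x).ne'
  have hfun : (Real.sinh / Real.cosh : ℝ → ℝ) = Real.tanh := by
    funext y; rw [Pi.div_apply, Real.tanh_eq_sinh_div_cosh]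
  rw [hfun] at h
  refine h.congr_deriv ?_
  have hc := Real.cosh_pos x
  have hid : Real.cosh x ^ 2 - Real.sinh x ^ 2 = 1 := Real.cosh_sq_sub_sinh_sq x
  rw [Real.tanh_eq_sinh_div_cosh]
  field_simp

/-- The Jacobian matrix of a planar vector field `F : ℝ² → ℝ²` at the point `p`:
the 2×2 real matrix of partial derivatives of the two components of `F`
with respect to the two coordinates. -/
noncomputable def jacobian (F : ℝ × ℝ → ℝ × ℝ) (p : ℝ × ℝ) : Matrix (Fin 2) (Fin 2) ℝ :=
  !![fderiv ℝ (fun q => (F q).1) p (1, 0), fderiv ℝ (fun q => (F q).1) p (0, 1);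
     fderiv ℝ (fun q => (F q).2) p (1, 0), fderiv ℝ (fun q => (F q).2) p (0, 1)]

/-- If `ẑ` is a real root of `h`, then the trace of the Jacobian
matrix `J(ẑ, kₛ·ẑ⁴)` of the S-NOD vector field equals
`T(ẑ) = c₃·ẑ⁶ − c₂·ẑ⁴ + c₁·ẑ² + c₀ − ε`. -/
theorem snod_trace_jacobian
    (a d k ks ε μ0 b : ℝ)
    (ha : 0 < a) (hd : 0 < d) (hk : 0 < k) (hks : 0 < ks) (hε : 0 < ε) (hμ0 : 0 < μ0)
    (c3 c2 c1 c0 : ℝ)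
    (hc3 : c3 = a * d ^ 2 * ks) (hc2 : c2 = 3 * a * d ^ 2 * k + a * ks)
    (hc1 : c1 = 3 * a * k - a * d ^ 2 * μ0) (hc0 : c0 = a * μ0 - d)
    (zhat : ℝ)
    (hroot : -d * zhat + Real.tanh (a * zhat * (-ks * zhat ^ 4 + k * zhat ^ 2 + μ0) + b) = 0) :
    Matrix.trace
      (jacobian
        (fun p : ℝ × ℝ =>
          (-d * p.1 + Real.tanh (a * p.1 * (k * p.1 ^ 2 + μ0 - p.2) + b),
            ε * (-p.2 + ks * p.1 ^ 4)))
        (zhat, ks * zhat ^ 4)) =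
      c3 * zhat ^ 6 - c2 * zhat ^ 4 + c1 * zhat ^ 2 + c0 - ε := by
  set p : ℝ × ℝ := (zhat, ks * zhat ^ 4) with hp
  have h1 : HasFDerivAt (fun q : ℝ × ℝ => q.1) (ContinuousLinearMap.fst ℝ ℝ ℝ) p :=
    hasFDerivAt_fst
  have h2 : HasFDerivAt (fun q : ℝ × ℝ => q.2) (ContinuousLinearMap.snd ℝ ℝ ℝ) p :=
    hasFDerivAt_snd
  have hsq : HasFDerivAt (fun q : ℝ × ℝ => q.1 ^ 2)
      ((2 * zhat) • ContinuousLinearMap.fst ℝ ℝ ℝ) p := by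
    have h := h1.mul h1
    have heq : ((fun q : ℝ × ℝ => q.1) * fun q : ℝ × ℝ => q.1) = fun q : ℝ × ℝ => q.1 ^ 2 := by
      funext q; simp only [Pi.mul_apply]; ring
    rw [heq] at h
    have hL : p.1 • ContinuousLinearMap.fst ℝ ℝ ℝ + p.1 • ContinuousLinearMap.fst ℝ ℝ ℝ
        = (2 * zhat) • ContinuousLinearMap.fst ℝ ℝ ℝ := by
      ext v <;> simp [hp] <;> ring
    rwa [hL] at h
  have hφ := (((h1.const_mul a).mul (((hsq.const_mul k).add_const μ0).sub h2)).add_const b)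
  have htanh := (my_hasDerivAt_tanh (a * p.1 * (k * p.1 ^ 2 + μ0 - p.2) + b)).comp_hasFDerivAt p hφ
  have hf1 := (h1.const_mul (-d)).add htanh
  have hf1' : HasFDerivAt (fun q : ℝ × ℝ => -d * q.1 + Real.tanh (a * q.1 * (k * q.1 ^ 2 + μ0 - q.2) + b)) _ p := hf1
  have hq4 : HasFDerivAt (fun q : ℝ × ℝ => q.1 ^ 4)
      ((4 * zhat ^ 3) • ContinuousLinearMap.fst ℝ ℝ ℝ) p := by
    have h := hsq.mul hsq
    have heq : ((fun q : ℝ × ℝ => q.1 ^ 2) * fun q : ℝ × ℝ => q.1 ^ 2) = fun q : ℝ × ℝ => q.1 ^ 4 := by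
      funext q; simp only [Pi.mul_apply]; ring
    rw [heq] at h
    have hL : p.1 ^ 2 • (2 * zhat) • ContinuousLinearMap.fst ℝ ℝ ℝ
          + p.1 ^ 2 • (2 * zhat) • ContinuousLinearMap.fst ℝ ℝ ℝ
        = (4 * zhat ^ 3) • ContinuousLinearMap.fst ℝ ℝ ℝ := by
      ext v <;> simp [hp] <;> ring
    rwa [hL] at h
  have hf2 := ((h2.neg.add (hq4.const_mul ks)).const_mul ε)
  have hf2' : HasFDerivAt (fun q : ℝ × ℝ => ε * (-q.2 + ks * q.1 ^ 4)) _ p := hf2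
  simp only [jacobian, Matrix.trace_fin_two, Matrix.cons_val', Matrix.cons_val_zero,
    Matrix.cons_val_one, Matrix.head_cons, Matrix.head_fin_const, Matrix.empty_val']
  rw [hf1'.fderiv, hf2'.fderiv]
  simp only [ContinuousLinearMap.add_apply, ContinuousLinearMap.smul_apply,
    ContinuousLinearMap.coe_fst', ContinuousLinearMap.coe_snd', ContinuousLinearMap.neg_apply,
    ContinuousLinearMap.sub_apply, ContinuousLinearMap.comp_apply, smul_eq_mul, hp]
  have htan : Real.tanh (a * zhat * (k * zhat ^ 2 + μ0 - ks * zhat ^ 4) + b) = d * zhat := by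
    have : a * zhat * (k * zhat ^ 2 + μ0 - ks * zhat ^ 4) + b
        = a * zhat * (-ks * zhat ^ 4 + k * zhat ^ 2 + μ0) + b := by ring
    rw [this]; linarith [hroot]
  rw [htan]
  subst hc3 hc2 hc1 hc0
  norm_num [Matrix.of_apply, Matrix.cons_val_zero, Matrix.cons_val_one, Matrix.head_cons]
  ring
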